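/- Let A, B ⊆ ℕ, let N be a natural number, and let Υ̂(C, D; N) denote the number of quadruples (c₁, c₂, d₁, d₂) with c₁, c₂ ∈ C ∩ (2N, 3N], d₁, d₂ ∈ D ∩ (0, N], c₁ - d₁ = c₂ - d₂ and c₁ ≠ c₂. Then either |B|_0^N · |ℕ \ (A+B)|_{2N}^{3N} ≤ 2·|ℕ \ A|_N^{3N}, or (|B|_0^N · |ℕ \ (A+B)|_{2N}^{3N})² ≤ 2·|ℕ \ A|_N^{3N} · Υ̂(ℕ \ (A+B), B; N). -/

import Mathlib

open Pointwise Finset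

theorem stmt_2 (A B : Set ℕ) (N : ℕ) :
    (B ∩ Set.Ioc 0 N).ncard * (((A + B)ᶜ : Set ℕ) ∩ Set.Ioc (2 * N) (3 * N)).ncard
      ≤ 2 * ((Aᶜ : Set ℕ) ∩ Set.Ioc N (3 * N)).ncard ∨
    ((B ∩ Set.Ioc 0 N).ncard * (((A + B)ᶜ : Set ℕ) ∩ Set.Ioc (2 * N) (3 * N)).ncard) ^ 2
      ≤ 2 * ((Aᶜ : Set ℕ) ∩ Set.Ioc N (3 * N)).ncard *
        {q : ℕ × ℕ × ℕ × ℕ |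
          q.1 ∈ ((A + B)ᶜ : Set ℕ) ∩ Set.Ioc (2 * N) (3 * N) ∧
          q.2.1 ∈ ((A + B)ᶜ : Set ℕ) ∩ Set.Ioc (2 * N) (3 * N) ∧
          q.2.2.1 ∈ B ∩ Set.Ioc 0 N ∧ q.2.2.2 ∈ B ∩ Set.Ioc 0 N ∧
          q.1 - q.2.2.1 = q.2.1 - q.2.2.2 ∧ q.1 ≠ q.2.1}.ncard := by
  classical
  set C : Finset ℕ := (Finset.Ioc (2*N) (3*N)).filter (· ∈ ((A+B)ᶜ : Set ℕ)) with hCdef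
  set D : Finset ℕ := (Finset.Ioc 0 N).filter (· ∈ B) with hDdef
  set E : Finset ℕ := (Finset.Ioc N (3*N)).filter (· ∈ (Aᶜ : Set ℕ)) with hEdef
  set QF : Finset (ℕ × ℕ × ℕ × ℕ) :=
    (C ×ˢ C ×ˢ D ×ˢ D).filter
      (fun q => q.1 - q.2.2.1 = q.2.1 - q.2.2.2 ∧ q.1 ≠ q.2.1) with hQFdef
  have hCset : ((A + B)ᶜ : Set ℕ) ∩ Set.Ioc (2 * N) (3 * N) = ↑C := by
    ext x; simp [hCdef, and_comm]
  have hDset : B ∩ Set.Ioc 0 N = ↑D := by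
    ext x; simp only [hDdef, Finset.coe_filter, Finset.mem_Ioc, Set.mem_setOf_eq, Set.mem_inter_iff, Set.mem_Ioc]; tauto
  have hEset : (Aᶜ : Set ℕ) ∩ Set.Ioc N (3 * N) = ↑E := by
    ext x; simp [hEdef, and_comm]
  have hQset : {q : ℕ × ℕ × ℕ × ℕ |
          q.1 ∈ ((A + B)ᶜ : Set ℕ) ∩ Set.Ioc (2 * N) (3 * N) ∧
          q.2.1 ∈ ((A + B)ᶜ : Set ℕ) ∩ Set.Ioc (2 * N) (3 * N) ∧
          q.2.2.1 ∈ B ∩ Set.Ioc 0 N ∧ q.2.2.2 ∈ B ∩ Set.Ioc 0 N ∧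
          q.1 - q.2.2.1 = q.2.1 - q.2.2.2 ∧ q.1 ≠ q.2.1} = ↑QF := by
    ext q
    simp only [hCset, hDset, hQFdef, Finset.coe_filter, Set.mem_setOf_eq,
      Finset.mem_product, Finset.mem_coe]
    tauto
  rw [hQset, hCset, hDset, hEset, Set.ncard_coe_finset, Set.ncard_coe_finset,
    Set.ncard_coe_finset, Set.ncard_coe_finset]
  -- key membership facts
  have hCmem : ∀ c ∈ C, c ∈ ((A+B)ᶜ : Set ℕ) ∧ 2*N < c ∧ c ≤ 3*N := by
    intro c hc; simp only [hCdef, Finset.mem_filter, Finset.mem_Ioc] at hc; tauto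
  have hDmem : ∀ d ∈ D, d ∈ B ∧ 0 < d ∧ d ≤ N := by
    intro d hd; simp only [hDdef, Finset.mem_filter, Finset.mem_Ioc] at hd; tauto
  have hsub : ∀ p ∈ C ×ˢ D, p.1 - p.2 ∈ E := by
    rintro ⟨c, d⟩ hp
    rw [Finset.mem_product] at hp
    obtain ⟨hcA, hc1, hc2⟩ := hCmem c hp.1
    obtain ⟨hdB, hd1, hd2⟩ := hDmem d hp.2
    simp only [hEdef, Finset.mem_filter, Finset.mem_Ioc]
    refine ⟨⟨by omega, by omega⟩, ?_⟩
    intro hA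
    exact hcA ⟨c - d, hA, d, hdB, by change c - d + d = c; omega⟩
  -- r e := number of pairs with difference e
  set r : ℕ → ℕ := fun e => ((C ×ˢ D).filter (fun p => p.1 - p.2 = e)).card with hr
  have hsum : C.card * D.card = ∑ e ∈ E, r e := by
    rw [← Finset.card_product]
    exact Finset.card_eq_sum_card_fiberwise hsub
  -- the "energy" finset
  set Q2 : Finset ((ℕ × ℕ) × ℕ × ℕ) :=
    ((C ×ˢ D) ×ˢ (C ×ˢ D)).filter (fun q => q.1.1 - q.1.2 = q.2.1 - q.2.2) with hQ2def
  have hQ2card : Q2.card = ∑ e ∈ E, (r e) ^ 2 := by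
    have h1 : Q2.card = ∑ e ∈ E, (Q2.filter (fun q => q.1.1 - q.1.2 = e)).card :=
      Finset.card_eq_sum_card_fiberwise (by
        intro q hq
        simp only [hQ2def, Finset.mem_coe, Finset.mem_filter, Finset.mem_product] at hq
        exact hsub q.1 (Finset.mem_product.2 hq.1.1))
    rw [h1]
    refine Finset.sum_congr rfl fun e _ => ?_
    have : Q2.filter (fun q => q.1.1 - q.1.2 = e) =
        ((C ×ˢ D).filter (fun p => p.1 - p.2 = e)) ×ˢ
          ((C ×ˢ D).filter (fun p => p.1 - p.2 = e)) := by
      ext q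
      simp only [hQ2def, Finset.mem_filter, Finset.mem_product]
      constructor
      · rintro ⟨⟨⟨h1, h2⟩, h3⟩, h4⟩
        exact ⟨⟨h1, h4⟩, h2, h3 ▸ h4⟩
      · rintro ⟨⟨h1, h2⟩, h3, h4⟩
        exact ⟨⟨⟨h1, h3⟩, h2.trans h4.symm⟩, h2⟩
    rw [this, Finset.card_product, sq]
  -- split Q2 into diagonal and off-diagonal parts
  have hsplit : (Q2.filter (fun q => q.1.1 = q.2.1)).card +
      (Q2.filter (fun q => ¬ q.1.1 = q.2.1)).card = Q2.card :=
    Finset.card_filter_add_card_filter_not _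
  -- diagonal part
  have hdiag_eq : ∀ q ∈ Q2.filter (fun q => q.1.1 = q.2.1), q.2 = q.1 := by
    rintro ⟨⟨c1, d1⟩, c2, d2⟩ hq
    simp only [hQ2def, Finset.mem_filter, Finset.mem_product] at hq
    obtain ⟨⟨⟨⟨hc1, hd1⟩, hc2, hd2⟩, hdiff⟩, hcc⟩ := hq
    obtain ⟨-, hc1a, -⟩ := hCmem c1 hc1
    obtain ⟨-, -, hd1b⟩ := hDmem d1 hd1
    obtain ⟨-, -, hd2b⟩ := hDmem d2 hd2
    simp only [Prod.mk.injEq]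
    constructor
    · omega
    · omega
  have hdiag : (Q2.filter (fun q => q.1.1 = q.2.1)).card = C.card * D.card := by
    rw [← Finset.card_product]
    refine Finset.card_nbij' (fun q => q.1) (fun p => (p, p)) ?_ ?_ ?_ ?_
    · intro q hq
      simp only [hQ2def, Finset.mem_coe, Finset.mem_filter] at hq
      exact (Finset.mem_product.1 hq.1.1).1
    · intro p hp
      exact Finset.mem_filter.2 ⟨Finset.mem_filter.2 ⟨Finset.mem_product.2 ⟨hp, hp⟩, rfl⟩, rfl⟩
    · intro q hq
      have h2 := hdiag_eq q hq
      cases q with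
      | mk a b => simp only at h2 ⊢; simp [h2]
    · intro p _; rfl
  -- off-diagonal part
  have hoff : (Q2.filter (fun q => ¬ q.1.1 = q.2.1)).card = QF.card := by
    refine Finset.card_nbij' (fun q => (q.1.1, q.2.1, q.1.2, q.2.2))
      (fun q => ((q.1, q.2.2.1), (q.2.1, q.2.2.2))) ?_ ?_ ?_ ?_
    · rintro ⟨⟨c1, d1⟩, c2, d2⟩ hq
      simp only [hQ2def, Finset.mem_coe, Finset.mem_filter, Finset.mem_product] at hq
      simp only [hQFdef, Finset.mem_coe, Finset.mem_filter, Finset.mem_product]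
      tauto
    · rintro ⟨c1, c2, d1, d2⟩ hq
      simp only [hQFdef, Finset.mem_coe, Finset.mem_filter, Finset.mem_product] at hq
      simp only [hQ2def, Finset.mem_coe, Finset.mem_filter, Finset.mem_product]
      tauto
    · rintro ⟨⟨c1, d1⟩, c2, d2⟩ _; rfl
    · rintro ⟨c1, c2, d1, d2⟩ _; rfl
  -- Cauchy-Schwarz
  have hCS : (∑ e ∈ E, r e) ^ 2 ≤ E.card * ∑ e ∈ E, (r e) ^ 2 :=
    sq_sum_le_card_mul_sum_sq
  have hkey : (C.card * D.card) ^ 2 ≤ E.card * (C.card * D.card + QF.card) := by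
    calc (C.card * D.card) ^ 2 = (∑ e ∈ E, r e) ^ 2 := by rw [hsum]
      _ ≤ E.card * ∑ e ∈ E, (r e) ^ 2 := hCS
      _ = E.card * Q2.card := by rw [hQ2card]
      _ = E.card * (C.card * D.card + QF.card) := by rw [← hsplit, hdiag, hoff]
  -- final dichotomy
  by_cases h : D.card * C.card ≤ 2 * E.card
  · exact Or.inl h
  · right
    push_neg at h
    nlinarith [hkey, Nat.zero_le QF.card]
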